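/- Let 𝒮 be a metrizable second-countable topological space, ℓ ∈ 𝒮, and P a transition function on 𝒮. If P is strong Feller continuous at ℓ (i.e., for every bounded Borel measurable f : 𝒮 → ℝ the map s ↦ P_s f is continuous at ℓ), then for every n ≥ 1 and every bounded continuous function f : 𝒮^n → ℝ, the function s ↦ P^n_s f is continuous at ℓ. -/

import Mathlib

open MeasureTheory ProbabilityTheory Filter Topology

noncomputable section

def iterK {S : Type*} [MeasurableSpace S] (κ : Kernel S S) :
    (n : ℕ) → S → Measure (Fin (n + 1) → S)
  | 0, s => (κ s).map (fun x _ => x)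
  | n + 1, s => (iterK κ n s).bind fun p => (κ (p (Fin.last n))).map (Fin.snoc p)

section Aux

variable {S : Type*} [MeasurableSpace S]

lemma measurable_constFun (n : ℕ) :
    Measurable (fun (x : S) (_ : Fin (n + 1)) => x) :=
  measurable_pi_lambda _ fun _ => measurable_id'

lemma measurable_snocFun (n : ℕ) :
    Measurable (fun q : (Fin (n + 1) → S) × S => (Fin.snoc q.1 q.2 : Fin (n + 2) → S)) := by
  apply measurable_pi_lambda
  intro i
  refine Fin.lastCases ?_ ?_ i
  · simpa only [Fin.snoc_last] using measurable_snd
  · intro j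
    simpa only [Fin.snoc_castSucc, Function.comp_def] using (measurable_pi_apply j).comp measurable_fst

lemma measurable_consFun (n : ℕ) :
    Measurable (fun q : S × (Fin (n + 1) → S) => (Fin.cons q.1 q.2 : Fin (n + 2) → S)) := by
  apply measurable_pi_lambda
  intro i
  refine Fin.cases ?_ ?_ i
  · simpa only [Fin.cons_zero] using measurable_fst
  · intro j
    simpa only [Fin.cons_succ, Function.comp_def] using (measurable_pi_apply j).comp measurable_snd

lemma measurable_cons_fixed (n : ℕ) (x : S) :
    Measurable (@Fin.cons (n + 1) (fun _ => S) x) :=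
  (measurable_consFun n).comp (measurable_const.prodMk measurable_id)

lemma measurable_snoc_fixed (n : ℕ) (p : Fin (n + 1) → S) :
    Measurable (@Fin.snoc (n + 1) (fun _ => S) p) :=
  (measurable_snocFun n).comp (measurable_const.prodMk measurable_id)

/-- The one-step transition kernel on paths. -/
def stepK (κ : Kernel S S) (n : ℕ) : Kernel (Fin (n + 1) → S) (Fin (n + 2) → S) :=
  Kernel.map (Kernel.id ×ₖ κ.comap (fun p => p (Fin.last n)) (measurable_pi_apply _))
    (fun q => Fin.snoc q.1 q.2)

lemma stepK_apply (κ : Kernel S S) [IsMarkovKernel κ] (n : ℕ) (p : Fin (n + 1) → S) :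
    stepK κ n p = (κ (p (Fin.last n))).map (Fin.snoc p) := by
  rw [stepK, Kernel.map_apply _ (measurable_snocFun n), Kernel.prod_apply, Kernel.id_apply,
    Kernel.comap_apply, Measure.dirac_prod,
    Measure.map_map (measurable_snocFun n) measurable_prodMk_left]
  rfl

instance stepK_isMarkov (κ : Kernel S S) [IsMarkovKernel κ] (n : ℕ) :
    IsMarkovKernel (stepK κ n) :=
  Kernel.IsMarkovKernel.map _ (measurable_snocFun n)

/-- The iterated kernel as a genuine kernel. -/
def iterKer (κ : Kernel S S) : (n : ℕ) → Kernel S (Fin (n + 1) → S)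
  | 0 => Kernel.map κ (fun x _ => x)
  | n + 1 => (stepK κ n) ∘ₖ iterKer κ n

instance iterKer_isMarkov (κ : Kernel S S) [IsMarkovKernel κ] (n : ℕ) :
    IsMarkovKernel (iterKer κ n) := by
  induction n with
  | zero =>
    exact Kernel.IsMarkovKernel.map _ (measurable_constFun 0)
  | succ n ih =>
    rw [iterKer]
    infer_instance

lemma iterK_eq (κ : Kernel S S) [IsMarkovKernel κ] : ∀ (n : ℕ) (s : S),
    iterK κ n s = iterKer κ n s
  | 0, s => by
      rw [iterK, iterKer, Kernel.map_apply _ (measurable_constFun 0)]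
  | n + 1, s => by
      rw [iterK, iterKer, Kernel.comp_apply, iterK_eq κ n s]
      exact congrArg (Measure.bind _) (funext fun p => (stepK_apply κ n p).symm)

/-- The kernel `x ↦ (iterKer κ n x).map (Fin.cons x)`. -/
def consK (κ : Kernel S S) (n : ℕ) : Kernel S (Fin (n + 2) → S) :=
  Kernel.map (Kernel.id ×ₖ iterKer κ n) (fun q => Fin.cons q.1 q.2)

lemma consK_apply (κ : Kernel S S) [IsMarkovKernel κ] (n : ℕ) (x : S) :
    consK κ n x = (iterKer κ n x).map (Fin.cons x) := by
  rw [consK, Kernel.map_apply _ (measurable_consFun n), Kernel.prod_apply, Kernel.id_apply,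
    Measure.dirac_prod, Measure.map_map (measurable_consFun n) measurable_prodMk_left]
  rfl

instance consK_isMarkov (κ : Kernel S S) [IsMarkovKernel κ] (n : ℕ) :
    IsMarkovKernel (consK κ n) :=
  Kernel.IsMarkovKernel.map _ (measurable_consFun n)

lemma bind_map_meas {α β γ : Type*} [MeasurableSpace α] [MeasurableSpace β] [MeasurableSpace γ]
    (μ : Measure α) {g : α → β} (hg : Measurable g) {m : β → Measure γ} (hm : Measurable m) :
    (μ.map g).bind m = μ.bind (fun x => m (g x)) := by
  ext s hs
  have hms : Measurable fun b => m b s := (Measure.measurable_coe hs).comp hm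
  have hmg : Measurable fun x => m (g x) := hm.comp hg
  rw [Measure.bind_apply hs hm.aemeasurable, lintegral_map hms hg, Measure.bind_apply hs hmg.aemeasurable]

lemma map_bind_meas {α β γ : Type*} [MeasurableSpace α] [MeasurableSpace β] [MeasurableSpace γ]
    (μ : Measure α) {m : α → Measure β} (hm : Measurable m) {g : β → γ} (hg : Measurable g) :
    (μ.bind m).map g = μ.bind (fun x => (m x).map g) := by
  ext s hs
  have hmg : Measurable fun x => (m x).map g := (Measure.measurable_map g hg).comp hm
  rw [Measure.map_apply hg hs, Measure.bind_apply (hg hs) hm.aemeasurable, Measure.bind_apply hs hmg.aemeasurable]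
  exact lintegral_congr fun x => (Measure.map_apply hg hs).symm

lemma cons_decomp (κ : Kernel S S) [IsMarkovKernel κ] : ∀ (n : ℕ) (s : S),
    iterKer κ (n + 1) s = (κ s).bind (consK κ n)
  | 0, s => by
      rw [iterKer, Kernel.comp_apply, iterKer,
        Kernel.map_apply _ (measurable_constFun 0),
        bind_map_meas _ (measurable_constFun 0) (stepK κ 0).measurable]
      refine congrArg (Measure.bind _) (funext fun x => ?_)
      rw [stepK_apply, consK_apply, iterKer,
        Kernel.map_apply _ (measurable_constFun 0),
        Measure.map_map (measurable_cons_fixed 0 x) (measurable_constFun 0)]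
      refine congrArg (Measure.map · (κ x)) (funext fun y => funext fun i => ?_)
      refine Fin.cases ?_ ?_ i
      · rfl
      · intro j
        fin_cases j
        rfl
  | n + 1, s => by
      rw [iterKer, Kernel.comp_apply, cons_decomp κ n s,
        Measure.bind_bind (consK κ n).measurable.aemeasurable (stepK κ (n + 1)).measurable.aemeasurable]
      refine congrArg (Measure.bind _) (funext fun x => ?_)
      rw [consK_apply, bind_map_meas _ (measurable_cons_fixed n x) (stepK κ (n + 1)).measurable,
        consK_apply, iterKer, Kernel.comp_apply,
        map_bind_meas _ (stepK κ n).measurable (measurable_cons_fixed (n + 1) x)]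
      refine congrArg (Measure.bind _) (funext fun p => ?_)
      rw [stepK_apply, stepK_apply,
        Measure.map_map (measurable_cons_fixed (n + 1) x) (measurable_snoc_fixed n p)]
      have h1 : (Fin.cons x p : Fin (n + 2) → S) (Fin.last (n + 1)) = p (Fin.last n) := by
        rw [← Fin.succ_last, Fin.cons_succ]
      rw [h1]
      refine congrArg (Measure.map · (κ (p (Fin.last n)))) (funext fun y => ?_)
      exact (Fin.cons_snoc_eq_snoc_cons x p y).symm

lemma integral_bind_kernel {α β : Type*} [MeasurableSpace α] [MeasurableSpace β]
    (μ : Measure α) [IsProbabilityMeasure μ] (Γ : Kernel α β) [IsMarkovKernel Γ]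
    {f : β → ℝ} (hf : Measurable f) {C : ℝ} (hC : ∀ y, |f y| ≤ C) :
    ∫ y, f y ∂(μ.bind Γ) = ∫ x, ∫ y, f y ∂(Γ x) ∂μ := by
  have hbind : μ.bind Γ = (μ ⊗ₘ Γ).map Prod.snd := by
    ext s hs
    rw [Measure.map_apply measurable_snd hs, Measure.compProd_apply (measurable_snd hs),
      Measure.bind_apply hs Γ.measurable.aemeasurable]
    rfl
  have hFin : IsFiniteMeasure (μ ⊗ₘ Γ) := by
    constructor
    rw [Measure.compProd_apply_univ]
    exact measure_lt_top μ _
  have hint : Integrable (fun z : α × β => f z.2) (μ ⊗ₘ Γ) := by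
    refine ⟨(hf.comp measurable_snd).aestronglyMeasurable, ?_⟩
    exact HasFiniteIntegral.of_bounded (C := C)
      (ae_of_all _ fun z => by simpa [Real.norm_eq_abs] using hC z.2)
  rw [hbind, integral_map measurable_snd.aemeasurable hf.aestronglyMeasurable,
    Measure.integral_compProd hint]

end Aux

/-- If a transition function `κ` on a metrizable second-countable
space is strong Feller continuous at `ℓ`, then for every `n ≥ 1` and every bounded
continuous `f : 𝒮^n → ℝ`, the function `s ↦ P^n_s f` is continuous at `ℓ`. -/
theorem statement11 {S : Type*} [TopologicalSpace S] [TopologicalSpace.MetrizableSpace S]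
    [SecondCountableTopology S] [MeasurableSpace S] [BorelSpace S]
    (κ : Kernel S S) [IsMarkovKernel κ] (ℓ : S)
    (hFeller : ∀ f : S → ℝ, Measurable f → (∃ C : ℝ, ∀ x, |f x| ≤ C) →
      ContinuousAt (fun s => ∫ x, f x ∂(κ s)) ℓ) :
    ∀ (n : ℕ) (f : (Fin (n + 1) → S) → ℝ), Continuous f → (∃ C : ℝ, ∀ p, |f p| ≤ C) →
      ContinuousAt (fun s => ∫ p, f p ∂(iterK κ n s)) ℓ := by
  intro n f hf hbdd
  obtain ⟨C, hC⟩ := hbdd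
  have hfm : Measurable f := hf.measurable
  cases n with
  | zero =>
    have key : (fun s => ∫ p, f p ∂(iterK κ 0 s)) = fun s => ∫ x, f (fun _ => x) ∂(κ s) := by
      funext s
      rw [show iterK κ 0 s = (κ s).map (fun x _ => x) from rfl,
        integral_map (measurable_constFun 0).aemeasurable hfm.aestronglyMeasurable]
    rw [key]
    exact hFeller _ (hfm.comp (measurable_constFun 0)) ⟨C, fun x => hC _⟩
  | succ n =>
    set g : S → ℝ := fun x => ∫ q, f q ∂(consK κ n x) with hg
    have key : (fun s => ∫ p, f p ∂(iterK κ (n + 1) s)) = fun s => ∫ x, g x ∂(κ s) := by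
      funext s
      rw [iterK_eq, cons_decomp, integral_bind_kernel (κ s) (consK κ n) hfm hC]
    have h1 : ∀ x, g x = ∫ p, f (Fin.cons x p) ∂(iterKer κ n x) := fun x => by
      show ∫ q, f q ∂(consK κ n x) = _
      rw [consK_apply,
        integral_map (measurable_cons_fixed n x).aemeasurable hfm.aestronglyMeasurable]
    have hgm : Measurable g := by
      have hsm : StronglyMeasurable (fun q : S × (Fin (n + 1) → S) => f (Fin.cons q.1 q.2)) :=
        (hfm.comp (measurable_consFun n)).stronglyMeasurable
      have := hsm.integral_kernel_prod_right' (κ := iterKer κ n)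
      rw [funext h1]
      exact this.measurable
    have hgb : ∀ x, |g x| ≤ C := by
      intro x
      have : ‖∫ q, f q ∂(consK κ n x)‖ ≤ C * ((consK κ n x) Set.univ).toReal :=
        norm_integral_le_of_norm_le_const (ae_of_all _ fun q => by
          simpa [Real.norm_eq_abs] using hC q)
      simpa [Real.norm_eq_abs] using this
    rw [key]
    exact hFeller g hgm ⟨C, hgb⟩
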